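/- The function h is harmonic on the positive integers for the random walk with step distribution (p_k): for every integer k ≥ 1, Σ_{j∈ℤ} p_j · h(k+j) = h(k) (the sum effectively runs over j ≤ 1 since p_j = 0 for j = 0 and j ≥ 2, and h vanishes on nonpositive integers). Equivalently, for every n ≥ 2, Σ_{m≥2} (h(m−1)/h(n−1)) · p_{m−n} = 1, so the numbers p_{n,m} := (h(m−1)/h(n−1)) p_{m−n} define a Markov transition kernel on {2,3,…}. -/

import Mathlib

/-- The step distribution of the peeling random walk for type II triangulations. -/
noncomputable def pStep : ℤ → ℝ := fun k =>
  if k = 1 then 2 / 3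
  else if k ≤ -1 then
    2 * (Nat.factorial (2 * (-k).toNat - 2) : ℝ) /
      (4 ^ (-k).toNat * (Nat.factorial ((-k).toNat - 1) : ℝ) *
        (Nat.factorial ((-k).toNat + 1) : ℝ))
  else 0

/-- The harmonic function `h(k) = Γ(k+1/2)/Γ(k)` for `k ≥ 1`, `h(k) = 0` for `k ≤ 0`. -/
noncomputable def hFun : ℤ → ℝ := fun k =>
  if 1 ≤ k then Real.Gamma ((k : ℝ) + 1 / 2) / Real.Gamma (k : ℝ) else 0

open Nat Real Finset

noncomputable def tT (a b : ℕ) : ℝ :=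
  2 * (2*a)! * (2*b+2)! / ((a)! * ((a+2))! * ((b+1))! * (b)!)

noncomputable def gH (a c : ℕ) : ℝ :=
  (-2) * a * (a+2) * (2*c+1) * (2*a)! * (2*c)! /
    ((a+c+1) * (2*a+2*c+3) * (a)! * ((a+2))! * ((c)!)^2)

noncomputable def rhsN (n : ℕ) : ℝ :=
  (n+1) * (2*n+4)! / (3 * (n+2) * ((n+2))! * ((n+1))!)

lemma factR (m : ℕ) : ((m+1)! : ℝ) = (m+1) * (m)! := by
  rw [Nat.factorial_succ]; push_cast; ring

lemma fact_ne (m : ℕ) : ((m)! : ℝ) ≠ 0 := by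
  exact_mod_cast m.factorial_ne_zero

lemma gH_zero (c : ℕ) : gH 0 c = 0 := by simp [gH]

lemma wz (a b : ℕ) :
    ((a+b+1)*(a+b+3) : ℝ) / (2*(a+b+2)*(2*(a+b)+5)) * tT a (b+1) - tT a b
      = gH (a+1) b - gH a (b+1) := by
  unfold tT gH
  have fb4 : ((2*(b+1)+2)! : ℝ) = (2*b+4)*((2*b+3)*((2*b+2)*((2*b+1)*(2*b)!))) := by
    rw [show 2*(b+1)+2 = (2*b+3)+1 by ring, factR, show 2*b+3 = (2*b+2)+1 by ring,
        factR, show 2*b+2 = (2*b+1)+1 by ring, factR, factR]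
    push_cast; ring
  have fb2 : ((2*b+2)! : ℝ) = (2*b+2)*((2*b+1)*(2*b)!) := by
    rw [show 2*b+2 = (2*b+1)+1 by ring, factR, factR]; push_cast; ring
  have fb2' : ((2*(b+1))! : ℝ) = (2*b+2)*((2*b+1)*(2*b)!) := by
    rw [show 2*(b+1) = (2*b+1)+1 by ring, factR, factR]; push_cast; ring
  have fbs2 : ((b+1+1)! : ℝ) = (b+2)*((b+1)*(b)!) := by
    rw [factR, factR]; push_cast; ring
  have fbs1 : ((b+1)! : ℝ) = (b+1)*(b)! := factR b
  have fa2 : ((2*(a+1))! : ℝ) = (2*a+2)*((2*a+1)*(2*a)!) := by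
    rw [show 2*(a+1) = (2*a+1)+1 by ring, factR, factR]; push_cast; ring
  have fas1 : ((a+1)! : ℝ) = (a+1)*(a)! := factR a
  have fas3 : ((a+1+2)! : ℝ) = (a+3)*(a+2)! := by
    rw [show a+1+2 = (a+2)+1 by ring, factR]; push_cast; ring
  rw [fb4, fb2, fb2', fbs2, fbs1, fa2, fas1, fas3]
  have h1 := fact_ne a
  have h2 := fact_ne (a+2)
  have h3 := fact_ne b
  have h4 := fact_ne (2*a)
  have h5 := fact_ne (2*b)
  have p1 : ((a:ℝ)+b+2) ≠ 0 := by positivity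
  have p3 : ((a:ℝ)+1) ≠ 0 := by positivity
  have p4 : ((b:ℝ)+1) ≠ 0 := by positivity
  have p5 : ((a:ℝ)+1+(b:ℝ)+1 : ℝ) ≠ 0 := by positivity
  push_cast
  field_simp
  ring

lemma final (n : ℕ) :
    ((n+1)*(n+3) : ℝ)/(2*(n+2)*(2*n+5)) * rhsN (n+1)
      = rhsN n + gH (n+1) 0 + ((n+1)*(n+3):ℝ)/(2*(n+2)*(2*n+5)) * tT (n+1) 0 := by
  unfold rhsN gH tT
  have f6 : ((2*(n+1)+4)! : ℝ)
      = (2*n+6)*((2*n+5)*((2*n+4)*((2*n+3)*(2*n+2)!))) := by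
    rw [show 2*(n+1)+4 = (2*n+5)+1 by ring, factR, show 2*n+5 = (2*n+4)+1 by ring,
        factR, show 2*n+4 = (2*n+3)+1 by ring, factR, show 2*n+3 = (2*n+2)+1 by ring, factR]
    push_cast; ring
  have f4 : ((2*n+4)! : ℝ) = (2*n+4)*((2*n+3)*(2*n+2)!) := by
    rw [show 2*n+4 = (2*n+3)+1 by ring, factR, show 2*n+3 = (2*n+2)+1 by ring, factR]
    push_cast; ring
  have f2 : ((2*(n+1))! : ℝ) = (2*n+2)! := by norm_num [two_mul]; ring_nf
  have g3 : ((n+1+2)! : ℝ) = (n+3)*((n+2)*(n+1)!) := by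
    rw [show n+1+2 = (n+2)+1 by ring, factR, show n+2 = (n+1)+1 by ring, factR]
    push_cast; ring
  have g2 : ((n+2)! : ℝ) = (n+2)*(n+1)! := by
    rw [show n+2 = (n+1)+1 by ring, factR]; push_cast; ring
  rw [f6, f4, f2, g3, g2]
  have h1 := fact_ne (n+1)
  have h2 := fact_ne (2*n+2)
  have p1 : ((n:ℝ)+2) ≠ 0 := by positivity
  have p2 : ((n:ℝ)+3) ≠ 0 := by positivity
  have p3 : (2*(n:ℝ)+5) ≠ 0 := by positivity
  norm_num [Nat.factorial]
  field_simp
  ring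

lemma sum_tT (n : ℕ) : ∑ a ∈ range (n+1), tT a (n-a) = rhsN n := by
  induction n with
  | zero => simp [tT, rhsN, Nat.factorial]; norm_num
  | succ n ih =>
    have hCne : (((n:ℝ)+1)*(n+3) : ℝ)/(2*(n+2)*(2*n+5)) ≠ 0 := by positivity
    have key : (((n:ℝ)+1)*(n+3))/(2*(n+2)*(2*n+5)) * ∑ a ∈ range (n+1), tT a ((n-a)+1)
        = rhsN n + gH (n+1) 0 := by
      rw [Finset.mul_sum]
      have step : ∀ a ∈ range (n+1),
          (((n:ℝ)+1)*(n+3))/(2*(n+2)*(2*n+5)) * tT a ((n-a)+1)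
            = tT a (n-a) + (gH (a+1) (n-a) - gH a ((n-a)+1)) := by
        intro a ha
        have haa : a ≤ n := by simpa using Nat.lt_succ_iff.mp (mem_range.mp ha)
        have h1 := wz a (n-a)
        have e : a + (n-a) = n := by omega
        have ec : ((a:ℝ) + ((n - a : ℕ) : ℝ)) = (n:ℝ) := by exact_mod_cast congrArg (Nat.cast : ℕ → ℝ) e
        rw [ec] at h1
        linarith [h1]
      rw [Finset.sum_congr rfl step, Finset.sum_add_distrib, ih]
      congr 1
      have tel : ∀ a ∈ range (n+1),
          gH (a+1) (n-a) - gH a ((n-a)+1)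
            = (fun x => gH x (n+1-x)) (a+1) - (fun x => gH x (n+1-x)) a := by
        intro a ha
        have haa : a ≤ n := by simpa using Nat.lt_succ_iff.mp (mem_range.mp ha)
        simp only
        congr 2 <;> omega
      rw [Finset.sum_congr rfl tel, Finset.sum_range_sub (fun x => gH x (n+1-x))]
      simp [gH_zero]
    have reind : ∑ a ∈ range (n+1+1), tT a (n+1-a)
        = (∑ a ∈ range (n+1), tT a ((n-a)+1)) + tT (n+1) 0 := by
      rw [Finset.sum_range_succ]
      congr 1
      · apply Finset.sum_congr rfl
        intro a ha
        have haa : a ≤ n := by simpa using Nat.lt_succ_iff.mp (mem_range.mp ha)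
        congr 1; omega
      · congr 1; omega
    apply mul_left_cancel₀ hCne
    rw [reind, mul_add, key, final n]

lemma gamma_half (n : ℕ) : Real.Gamma ((n:ℝ) + 1/2) = (2*n)! * √π / (4^n * (n)!) := by
  induction n with
  | zero => simpa using Real.Gamma_one_half_eq
  | succ n ih =>
    have hne : ((n:ℝ) + 1/2) ≠ 0 := by positivity
    push_cast
    have : ((n:ℝ)+1) + 1/2 = ((n:ℝ)+1/2) + 1 := by ring
    rw [this, Real.Gamma_add_one hne, ih]
    have f2 : ((2*(n+1))! : ℝ) = (2*n+2)*((2*n+1)*(2*n)!) := by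
      rw [show 2*(n+1) = (2*n+1)+1 by ring, factR, factR]; push_cast; ring
    rw [f2, factR n]
    have h1 := fact_ne n
    have h4 : ((4:ℝ)^n) ≠ 0 := by positivity
    have p3 : ((n:ℝ)+1) ≠ 0 := by positivity
    rw [pow_succ]
    field_simp
    ring

lemma hFun_nat (m : ℕ) :
    hFun ((m:ℤ)+1) = (2*m+2)! * √π / (4^(m+1) * ((m+1))! * (m)!) := by
  unfold hFun
  rw [if_pos (by omega : (1:ℤ) ≤ (m:ℤ)+1)]
  have e1 : (((m:ℤ)+1 : ℤ) : ℝ) = ((m+1 : ℕ) : ℝ) := by push_cast; ring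
  rw [e1, gamma_half (m+1)]
  rw [show ((m+1 : ℕ):ℝ) = (m:ℝ)+1 by push_cast; ring, Real.Gamma_nat_eq_factorial m]
  have f2 : ((2*(m+1))! : ℝ) = ((2*m+2)! : ℝ) := by norm_num [two_mul]; ring_nf
  rw [f2]
  rw [div_div]

lemma hFun_nat_pos (m : ℕ) : 0 < hFun ((m:ℤ)+1) := by
  rw [hFun_nat]
  have := Real.pi_pos
  positivity

lemma hFun_nonpos (k : ℤ) (h : k ≤ 0) : hFun k = 0 := by
  unfold hFun; rw [if_neg (by omega)]

lemma pStep_one : pStep 1 = 2/3 := by simp [pStep]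

lemma pStep_zero : pStep 0 = 0 := by norm_num [pStep]

lemma pStep_big (j : ℤ) (h : 2 ≤ j) : pStep j = 0 := by
  unfold pStep; rw [if_neg (by omega), if_neg (by omega)]

lemma pStep_neg (i : ℕ) :
    pStep (-((i:ℤ)+1)) = 2*(2*i)! / (4^(i+1) * (i)! * ((i+2))!) := by
  unfold pStep
  rw [if_neg (by omega), if_pos (by omega)]
  have e : (-(-((i:ℤ)+1))).toNat = i+1 := by omega
  rw [e, show 2*(i+1)-2 = 2*i by omega, show i+1-1 = i by omega,
      show i+1+1 = i+2 by omega]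

lemma term_eq (i b : ℕ) :
    (2*(2*i)! / (4^(i+1) * (i)! * ((i+2))!) : ℝ) *
      ((2*b+2)! * √π / (4^(b+1) * ((b+1))! * (b)!))
      = √π / 4^(i+b+2) * tT i b := by
  unfold tT
  rw [show (4:ℝ)^(i+b+2) = 4^(i+1)*4^(b+1) by rw [← pow_add]; congr 1; omega]
  have h1 := fact_ne i
  have h2 := fact_ne (i+2)
  have h3 := fact_ne b
  have h4 := fact_ne (b+1)
  have h5 : ((4:ℝ)^(i+1)) ≠ 0 := by positivity
  have h6 : ((4:ℝ)^(b+1)) ≠ 0 := by positivity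
  field_simp

lemma inj_one_sub : Function.Injective (fun i : ℕ => 1 - (i:ℤ)) := by
  intro a b h; simp only at h; omega

lemma key1 (N : ℕ) : ∑' j : ℤ, pStep j * hFun ((N:ℤ)+1 + j) = hFun ((N:ℤ)+1) := by
  have h0 : ∀ j ∉ Finset.Icc (-(N:ℤ)) 1, pStep j * hFun ((N:ℤ)+1+j) = 0 := by
    intro j hj
    rw [Finset.mem_Icc] at hj
    push_neg at hj
    by_cases h1 : 2 ≤ j
    · rw [pStep_big j h1, zero_mul]
    · rw [hFun_nonpos ((N:ℤ)+1+j) (by omega), mul_zero]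
  rw [tsum_eq_sum h0]
  have hs : Finset.Icc (-(N:ℤ)) 1
      = (range (N+2)).map (⟨fun i : ℕ => 1 - (i:ℤ), inj_one_sub⟩ : ℕ ↪ ℤ) := by
    ext x
    simp only [Finset.mem_Icc, Finset.mem_map, Finset.mem_range,
      Function.Embedding.coeFn_mk]
    constructor
    · intro hx
      exact ⟨(1-x).toNat, by omega, by omega⟩
    · rintro ⟨i, hi, rfl⟩
      omega
  rw [hs, Finset.sum_map]
  simp only [Function.Embedding.coeFn_mk]
  rw [Finset.sum_range_succ', Finset.sum_range_succ']
  have e0 : pStep (1 - ((0:ℕ):ℤ)) * hFun ((N:ℤ)+1+(1 - ((0:ℕ):ℤ))) = 2/3 * hFun ((N:ℤ)+2) := by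
    norm_num [pStep_one]
    ring_nf
  have e1 : pStep (1 - ((0+1:ℕ):ℤ)) * hFun ((N:ℤ)+1+(1 - ((0+1:ℕ):ℤ))) = 0 := by
    norm_num [pStep_zero]
  have emain : ∀ i ∈ range N,
      pStep (1 - ((i+1+1:ℕ):ℤ)) * hFun ((N:ℤ)+1+(1 - ((i+1+1:ℕ):ℤ)))
        = √π / 4^(N+1) * tT i (N-1-i) := by
    intro i hi
    have hiN : i < N := mem_range.mp hi
    have a1 : (1 - ((i+1+1:ℕ):ℤ)) = -((i:ℤ)+1) := by push_cast; ring
    have a2 : ((N:ℤ)+1+(1 - ((i+1+1:ℕ):ℤ))) = ((N-1-i : ℕ):ℤ)+1 := by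
      push_cast [Nat.cast_sub, hiN]
      omega
    rw [a2, a1, pStep_neg i, hFun_nat (N-1-i), term_eq i (N-1-i),
        show i+(N-1-i)+2 = N+1 by omega]
  rw [Finset.sum_congr rfl emain, e0, e1, ← Finset.mul_sum]
  rcases N with _ | M
  · simp only [Finset.range_zero, Finset.sum_empty, mul_zero]
    rw [show ((0:ℕ):ℤ)+2 = ((1:ℕ):ℤ)+1 by norm_num, hFun_nat 1, hFun_nat 0]
    norm_num [Nat.factorial]
    ring
  · have hsum : ∑ i ∈ range (M+1), tT i (M+1-1-i) = rhsN M := by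
      rw [← sum_tT M]
      apply Finset.sum_congr rfl
      intro a ha
      rfl
    rw [hsum]
    rw [show ((M+1:ℕ):ℤ)+2 = ((M+2:ℕ):ℤ)+1 by push_cast; ring, hFun_nat (M+2),
        hFun_nat (M+1)]
    unfold rhsN
    have f6 : ((2*(M+2)+2)! : ℝ) = (2*M+6)*((2*M+5)*(2*M+4)!) := by
      rw [show 2*(M+2)+2 = (2*M+5)+1 by ring, factR, show 2*M+5 = (2*M+4)+1 by ring, factR]
      push_cast; ring
    have f4 : ((2*(M+1)+2)! : ℝ) = ((2*M+4)! : ℝ) := by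
      rw [show 2*(M+1)+2 = 2*M+4 by ring]
    have g3 : ((M+2+1)! : ℝ) = (M+3)*(M+2)! := by
      rw [show M+2+1 = (M+2)+1 by ring, factR]; push_cast; ring
    have g1 : ((M+1+1)! : ℝ) = ((M+2)! : ℝ) := by
      rw [show M+1+1 = M+2 by ring]
    have g2 : ((M+2)! : ℝ) = (M+2)*(M+1)! := by
      rw [show M+2 = (M+1)+1 by ring, factR]; push_cast; ring
    rw [f6, f4, g3, g1, g2]
    have h1 := fact_ne (M+1)
    have h2 := fact_ne (M+2)
    have h3 := fact_ne (2*M+4)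
    have p1 : ((M:ℝ)+2) ≠ 0 := by positivity
    have p2 : ((M:ℝ)+3) ≠ 0 := by positivity
    have p4 : ((4:ℝ)^(M+1+1)) ≠ 0 := by positivity
    have psq : √π ≠ 0 := by
      have := Real.pi_pos; positivity
    rw [pow_succ ((4:ℝ)) (M+2), pow_succ ((4:ℝ)) (M+1)]
    push_cast
    field_simp
    ring

theorem hFun_harmonic :
    (∀ k : ℤ, 1 ≤ k → ∑' j : ℤ, pStep j * hFun (k + j) = hFun k) ∧
    (∀ n : ℤ, 2 ≤ n →
      ∑' m : {m : ℤ // 2 ≤ m}, hFun ((m : ℤ) - 1) / hFun (n - 1) * pStep ((m : ℤ) - n) = 1) := by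
  have part1 : ∀ k : ℤ, 1 ≤ k → ∑' j : ℤ, pStep j * hFun (k + j) = hFun k := by
    intro k hk
    obtain ⟨N, rfl⟩ : ∃ N : ℕ, k = (N:ℤ)+1 := ⟨(k-1).toNat, by omega⟩
    exact key1 N
  refine ⟨part1, ?_⟩
  intro n hn
  obtain ⟨M, hM⟩ : ∃ M : ℕ, n - 1 = (M:ℤ)+1 := ⟨(n-2).toNat, by omega⟩
  have hpos : hFun (n-1) ≠ 0 := by rw [hM]; exact (hFun_nat_pos M).ne'
  have step1 : ∀ m : {m : ℤ // 2 ≤ m},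
      hFun ((m : ℤ) - 1) / hFun (n - 1) * pStep ((m : ℤ) - n)
        = (hFun ((m : ℤ) - 1) * pStep ((m : ℤ) - n)) / hFun (n-1) := by
    intro m; ring
  rw [tsum_congr step1, tsum_div_const]
  have step2 : ∑' m : {m : ℤ // 2 ≤ m}, hFun ((m : ℤ) - 1) * pStep ((m : ℤ) - n)
      = ∑' m : ℤ, hFun (m - 1) * pStep (m - n) := by
    refine (_root_.tsum_subtype {m : ℤ | 2 ≤ m} (fun m => hFun (m - 1) * pStep (m - n))).trans ?_
    apply tsum_congr
    intro m
    by_cases hm : m ∈ {m : ℤ | 2 ≤ m}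
    · rw [Set.indicator_of_mem hm (fun m => hFun (m - 1) * pStep (m - n))]
    · have hm2 : ¬ (2 ≤ m) := hm
      rw [Set.indicator_of_notMem hm, hFun_nonpos (m-1) (by omega), zero_mul]
  rw [step2]
  have step3 : ∑' m : ℤ, hFun (m - 1) * pStep (m - n)
      = ∑' j : ℤ, pStep j * hFun ((n-1) + j) := by
    rw [← (Equiv.addLeft n).tsum_eq (fun m => hFun (m - 1) * pStep (m - n))]
    apply tsum_congr
    intro j
    simp only [Equiv.coe_addLeft]
    rw [show n + j - 1 = (n-1) + j by ring, show n + j - n = j by ring, mul_comm]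
  rw [step3, part1 (n-1) (by omega), div_self hpos]
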